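/- arXiv:2602.21665 — 4 statements merged into one kernel-verified Lean document; each statement's English description precedes it below -/
import Mathlib

section
/- There exists a constant C > 0 such that for all t > 0 and all f ∈ H¹(ℝ²), one has ‖e^{tΔ}f‖_{L^∞(ℝ²)} ≤ C (log(e + 1/t))^{1/2} ‖f‖_{H¹(ℝ²)}. -/
open MeasureTheory Real Set

noncomputable section

abbrev R2 := EuclideanSpace ℝ (Fin 2)

/-- Fourier transform on ℝ² with normalization (2π)⁻¹ ∫ e^{-ix·ξ} f(x) dx. -/
def FT (f : R2 → ℂ) (ξ : R2) : ℂ :=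
  (1 / (2 * (π : ℂ))) * ∫ x : R2, Complex.exp (-Complex.I * ((inner ℝ x ξ : ℝ) : ℂ)) * f x

/-- Inverse Fourier transform. -/
def invFT (g : R2 → ℂ) (x : R2) : ℂ :=
  (1 / (2 * (π : ℂ))) * ∫ ξ : R2, Complex.exp (Complex.I * ((inner ℝ x ξ : ℝ) : ℂ)) * g ξ

/-- Heat semigroup e^{tΔ} = 𝓕⁻¹ e^{-t|ξ|²} 𝓕. -/
def heat (t : ℝ) (f : R2 → ℂ) : R2 → ℂ :=
  invFT (fun ξ => Complex.exp (-(t : ℂ) * (‖ξ‖ : ℂ) ^ 2) * FT f ξ)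

/-- H¹ norm via the Fourier transform. -/
def H1norm (f : R2 → ℂ) : ℝ :=
  (∫ ξ : R2, (1 + ‖ξ‖ ^ 2) * ‖FT f ξ‖ ^ 2) ^ (1 / 2 : ℝ)

/-- Membership in H¹(ℝ²). -/
def MemH1 (f : R2 → ℂ) : Prop :=
  MemLp f 2 volume ∧ Integrable (fun ξ : R2 => (1 + ‖ξ‖ ^ 2) * ‖FT f ξ‖ ^ 2)

/-- Exponential integral E₁. -/
def E1 (τ : ℝ) : ℝ := ∫ ρ in Ioi τ, Real.exp (-ρ) / ρ

namespace HeatAux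

lemma tail_int {t R : ℝ} (ht : 0 < t) :
    ∫ r in Ioi R, r * Real.exp (-(2*t) * r ^ 2) = Real.exp (-(2*t) * R ^ 2) / (4 * t) := by
  have hderiv : ∀ x ∈ Ici R, HasDerivAt (fun r : ℝ => -Real.exp (-(2*t) * r ^ 2) / (4 * t))
      (x * Real.exp (-(2*t) * x ^ 2)) x := by
    intro x _
    have h1 : HasDerivAt (fun r : ℝ => -(2*t) * r ^ 2) (-(2*t) * (2*x)) x := by
      simpa using ((hasDerivAt_pow 2 x).const_mul (-(2*t)))
    have h2 := (h1.exp).neg.div_const (4 * t)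
    refine h2.congr_deriv ?_
    rw [div_eq_iff (mul_pos four_pos ht).ne']
    ring
  have hint : IntegrableOn (fun r : ℝ => r * Real.exp (-(2*t) * r ^ 2)) (Ioi R) :=
    (integrable_mul_exp_neg_mul_sq (by linarith : (0:ℝ) < 2*t)).integrableOn
  have htend : Filter.Tendsto (fun r : ℝ => -Real.exp (-(2*t) * r ^ 2) / (4 * t))
      Filter.atTop (nhds 0) := by
    have h3 : Filter.Tendsto (fun r : ℝ => -(2*t) * r ^ 2) Filter.atTop Filter.atBot := by
      apply Filter.Tendsto.const_mul_atTop_of_neg (by linarith : -(2*t) < 0)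
      exact Filter.tendsto_pow_atTop (by norm_num)
    have := (Real.tendsto_exp_atBot.comp h3).neg.div_const (4*t)
    simpa using this
  have := MeasureTheory.integral_Ioi_of_hasDerivAt_of_tendsto' hderiv hint htend
  rw [this]
  field_simp
  ring

lemma head_int {R : ℝ} (hR : 0 ≤ R) :
    ∫ r in Ioc (0:ℝ) R, r / (1 + r ^ 2) = Real.log (1 + R ^ 2) / 2 := by
  have hcont : Continuous fun r : ℝ => r / (1 + r ^ 2) := by
    apply Continuous.div continuous_id (by continuity)
    intro x; positivity
  have hderiv : ∀ x ∈ uIcc (0:ℝ) R, HasDerivAt (fun r : ℝ => Real.log (1 + r ^ 2) / 2)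
      (x / (1 + x ^ 2)) x := by
    intro x _
    have h1 : HasDerivAt (fun r : ℝ => 1 + r ^ 2) (2 * x) x := by
      simpa using ((hasDerivAt_pow 2 x).const_add 1)
    have hne : (1 + x ^ 2) ≠ 0 := by positivity
    have h2 := (h1.log hne).div_const 2
    refine h2.congr_deriv ?_
    ring
  have := intervalIntegral.integral_eq_sub_of_hasDerivAt hderiv (hcont.intervalIntegrable 0 R)
  rw [intervalIntegral.integral_of_le hR] at this
  rw [this]
  simp

lemma oneD_bound {t : ℝ} (ht : 0 < t) :
    ∫ r in Ioi (0:ℝ), r * (Real.exp (-(2*t) * r ^ 2) / (1 + r ^ 2)) ≤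
      (5/4) * Real.log (Real.exp 1 + 1/t) := by
  set L := Real.log (Real.exp 1 + 1/t) with hLdef
  have hpos : (0:ℝ) < Real.exp 1 + 1/t := by positivity
  have hL1 : 1 ≤ L := by
    rw [hLdef]
    calc (1:ℝ) = Real.log (Real.exp 1) := (Real.log_exp 1).symm
    _ ≤ _ := Real.log_le_log (Real.exp_pos 1) (le_add_of_nonneg_right (by positivity))
  have hLt : 0 ≤ L / t := by positivity
  set R := Real.sqrt (L / t) with hRdef
  have hR2 : R ^ 2 = L / t := Real.sq_sqrt hLt
  have hRpos : 0 < R := Real.sqrt_pos.2 (by positivity)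
  have hgint : Integrable (fun r : ℝ => r * Real.exp (-(2*t) * r ^ 2)) :=
    integrable_mul_exp_neg_mul_sq (by linarith)
  have hcont : Continuous fun r : ℝ => r * (Real.exp (-(2*t) * r ^ 2) / (1 + r ^ 2)) := by
    apply continuous_id.mul (Continuous.div (by continuity) (by continuity) ?_)
    intro x; positivity
  have hfle : ∀ r : ℝ, 0 ≤ r → r * (Real.exp (-(2*t) * r ^ 2) / (1 + r ^ 2)) ≤
      r * Real.exp (-(2*t) * r ^ 2) := by
    intro r hr
    apply mul_le_mul_of_nonneg_left _ hr
    rw [div_le_iff₀ (by positivity : (0:ℝ) < 1 + r ^ 2)]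
    nlinarith [Real.exp_nonneg (-(2*t) * r ^ 2), sq_nonneg r]
  have hint : IntegrableOn (fun r : ℝ => r * (Real.exp (-(2*t) * r ^ 2) / (1 + r ^ 2))) (Ioi 0) := by
    apply Integrable.mono hgint.integrableOn hcont.aestronglyMeasurable.restrict
    filter_upwards [ae_restrict_mem measurableSet_Ioi] with r hr
    have hr0 : (0:ℝ) ≤ r := le_of_lt hr
    rw [Real.norm_of_nonneg (by positivity), Real.norm_of_nonneg (by positivity)]
    exact hfle r hr0
  have hsplit : Ioc (0:ℝ) R ∪ Ioi R = Ioi 0 := Ioc_union_Ioi_eq_Ioi hRpos.le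
  have hdisj : Disjoint (Ioc (0:ℝ) R) (Ioi R) := Ioc_disjoint_Ioi le_rfl
  rw [← hsplit, setIntegral_union hdisj measurableSet_Ioi
    (hint.mono_set (by rw [← hsplit]; exact subset_union_left))
    (hint.mono_set (by rw [← hsplit]; exact subset_union_right))]
  have hLle : L ≤ Real.exp 1 + 1/t := by
    have := Real.log_le_sub_one_of_pos hpos
    rw [← hLdef] at this; linarith
  have he2 : (2:ℝ) ≤ Real.exp 1 := by
    have := Real.exp_one_gt_d9; linarith
  have hpiece1 : ∫ r in Ioc (0:ℝ) R, r * (Real.exp (-(2*t) * r ^ 2) / (1 + r ^ 2)) ≤ L := by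
    have h1 : ∫ r in Ioc (0:ℝ) R, r * (Real.exp (-(2*t) * r ^ 2) / (1 + r ^ 2)) ≤
        ∫ r in Ioc (0:ℝ) R, r / (1 + r ^ 2) := by
      apply setIntegral_mono_on
      · exact hint.mono_set (by rw [← hsplit]; exact subset_union_left)
      · apply Continuous.integrableOn_Ioc
        apply continuous_id.div (by continuity); intro x; positivity
      · exact measurableSet_Ioc
      · intro r hr
        have hr0 : (0:ℝ) ≤ r := hr.1.le
        have hexp : Real.exp (-(2*t) * r ^ 2) ≤ 1 :=
          Real.exp_le_one_iff.2 (by nlinarith [sq_nonneg r])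
        calc r * (Real.exp (-(2*t) * r ^ 2) / (1 + r ^ 2))
            = (r / (1 + r ^ 2)) * Real.exp (-(2*t) * r ^ 2) := by ring
          _ ≤ (r / (1 + r ^ 2)) * 1 :=
              mul_le_mul_of_nonneg_left hexp (by positivity)
          _ = r / (1 + r ^ 2) := mul_one _
    rw [head_int hRpos.le] at h1
    have hlog : Real.log (1 + R ^ 2) ≤ 2 * L := by
      have hsq : 1 + R ^ 2 ≤ (Real.exp 1 + 1/t) ^ 2 := by
        rw [hR2, div_eq_mul_one_div L t]
        have hu : (0:ℝ) < 1/t := by positivity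
        nlinarith [mul_le_mul_of_nonneg_right hLle hu.le, he2, hu, mul_pos hu hu]
      calc Real.log (1 + R ^ 2) ≤ Real.log ((Real.exp 1 + 1/t) ^ 2) :=
            Real.log_le_log (by positivity) hsq
        _ = 2 * L := by rw [Real.log_pow]; push_cast; rw [hLdef]
    linarith
  have hpiece2 : ∫ r in Ioi R, r * (Real.exp (-(2*t) * r ^ 2) / (1 + r ^ 2)) ≤ 1/4 := by
    have h1 : ∫ r in Ioi R, r * (Real.exp (-(2*t) * r ^ 2) / (1 + r ^ 2)) ≤
        ∫ r in Ioi R, r * Real.exp (-(2*t) * r ^ 2) := by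
      apply setIntegral_mono_on
      · exact hint.mono_set (by rw [← hsplit]; exact subset_union_right)
      · exact hgint.integrableOn
      · exact measurableSet_Ioi
      · intro r hr
        exact hfle r (le_trans hRpos.le (le_of_lt hr))
    rw [tail_int ht] at h1
    have hexp : Real.exp (-(2*t) * R ^ 2) = ((Real.exp 1 + 1/t) ^ 2)⁻¹ := by
      rw [hR2]
      have h0 : -(2*t) * (L / t) = -(L + L) := by field_simp; ring
      rw [h0, Real.exp_neg, Real.exp_add, hLdef, Real.exp_log hpos, ← sq]
    rw [hexp] at h1
    have hu : (0:ℝ) < 1/t := by positivity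
    have hut : t * (1/t) = 1 := by field_simp
    have hkey : 1 ≤ t * (Real.exp 1 + 1/t) ^ 2 := by
      nlinarith [he2, ht.le, hut, mul_nonneg ht.le (sq_nonneg (Real.exp 1)),
        mul_nonneg ht.le (sq_nonneg (1/t))]
    have h3 : ((Real.exp 1 + 1/t) ^ 2)⁻¹ ≤ t := by
      rw [← one_div, div_le_iff₀ (by positivity)]
      linarith [hkey]
    have h4 : ((Real.exp 1 + 1/t) ^ 2)⁻¹ / (4 * t) ≤ 1/4 := by
      rw [div_le_div_iff₀ (by positivity) (by norm_num)]
      linarith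
    linarith
  linarith

lemma vol_ball_R2 : volume (Metric.ball (0:R2) 1) = ENNReal.ofReal π := by
  rw [EuclideanSpace.volume_ball]
  simp [Real.sq_sqrt Real.pi_nonneg]
  rw [show (1:ℝ) + 1 = 2 by norm_num, Real.Gamma_two, div_one]

lemma radial (f : ℝ → ℝ) :
    ∫ x : R2, f ‖x‖ = 2 * π * ∫ y in Ioi (0:ℝ), y * f y := by
  rw [MeasureTheory.integral_fun_norm_addHaar volume f]
  simp only [finrank_euclideanSpace, Fintype.card_fin, vol_ball_R2,
    ENNReal.toReal_ofReal Real.pi_nonneg, nsmul_eq_mul, smul_eq_mul, pow_one]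
  norm_num
  rw [measureReal_def, vol_ball_R2, ENNReal.toReal_ofReal Real.pi_nonneg]
  ring

lemma gauss_int {b : ℝ} (hb : 0 < b) :
    Integrable (fun ξ : R2 => Real.exp (-b * ‖ξ‖ ^ 2)) := by
  have h := (GaussianFourier.integrable_cexp_neg_mul_sq_norm_add (V := R2) (b := (b:ℂ))
    (by simpa using hb) 0 0).norm
  apply h.congr
  filter_upwards with ξ
  rw [show (-(b:ℂ) * (‖ξ‖:ℂ)^2 + 0 * _ ) = ((-b * ‖ξ‖^2 : ℝ) : ℂ) by push_cast; ring]
  rw [Complex.norm_exp]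
  rw [Complex.ofReal_re]

end HeatAux

open HeatAux

theorem stmt0 :
    ∃ C > (0 : ℝ), ∀ t > (0 : ℝ), ∀ f : R2 → ℂ, MemH1 f →
      eLpNorm (heat t f) ⊤ volume ≤
        ENNReal.ofReal (C * Real.sqrt (Real.log (Real.exp 1 + 1 / t)) * H1norm f) := by
  refine ⟨1, one_pos, fun t ht f hf => ?_⟩
  set L := Real.log (Real.exp 1 + 1/t) with hLdef
  have hpos : (0:ℝ) < Real.exp 1 + 1/t := by positivity
  have hL1 : 1 ≤ L := by
    rw [hLdef]
    calc (1:ℝ) = Real.log (Real.exp 1) := (Real.log_exp 1).symm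
    _ ≤ _ := Real.log_le_log (Real.exp_pos 1) (le_add_of_nonneg_right (by positivity))
  have hL0 : 0 ≤ L := by linarith
  set w : R2 → ℝ := fun ξ => Real.exp (-t * ‖ξ‖ ^ 2) / Real.sqrt (1 + ‖ξ‖ ^ 2) with hwdef
  set h : R2 → ℝ := fun ξ => Real.sqrt ((1 + ‖ξ‖ ^ 2) * ‖FT f ξ‖ ^ 2) with hhdef
  have hsq_pos : ∀ ξ : R2, (0:ℝ) < 1 + ‖ξ‖ ^ 2 := fun ξ => by positivity
  have hw_cont : Continuous w := by
    apply Continuous.div (by continuity) (by continuity)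
    intro ξ
    exact (Real.sqrt_pos.2 (hsq_pos ξ)).ne'
  have hw_sq : ∀ ξ : R2, w ξ ^ 2 = Real.exp (-(2*t) * ‖ξ‖ ^ 2) / (1 + ‖ξ‖ ^ 2) := by
    intro ξ
    rw [hwdef]
    simp only
    rw [div_pow, Real.sq_sqrt (hsq_pos ξ).le, sq, ← Real.exp_add]
    ring_nf
  have hw2_int : Integrable (fun ξ : R2 => w ξ ^ 2) := by
    apply Integrable.mono (gauss_int (by linarith : (0:ℝ) < 2*t))
      ((hw_cont.pow 2).aestronglyMeasurable)
    filter_upwards with ξ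
    rw [Pi.pow_apply, hw_sq ξ, Real.norm_of_nonneg (by positivity), Real.norm_of_nonneg (Real.exp_nonneg _)]
    rw [div_le_iff₀ (hsq_pos ξ)]
    nlinarith [Real.exp_nonneg (-(2*t) * ‖ξ‖ ^ 2), sq_nonneg ‖ξ‖]
  have hw_mem : MemLp w 2 volume :=
    (memLp_two_iff_integrable_sq hw_cont.aestronglyMeasurable).2 hw2_int
  have hF_int : Integrable (fun ξ : R2 => (1 + ‖ξ‖ ^ 2) * ‖FT f ξ‖ ^ 2) := hf.2
  have hh_meas : AEStronglyMeasurable h volume :=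
    Real.continuous_sqrt.comp_aestronglyMeasurable hF_int.aestronglyMeasurable
  have hh_sq : ∀ ξ : R2, h ξ ^ 2 = (1 + ‖ξ‖ ^ 2) * ‖FT f ξ‖ ^ 2 := by
    intro ξ
    rw [hhdef]
    exact Real.sq_sqrt (by positivity)
  have hh2_int : Integrable (fun ξ : R2 => h ξ ^ 2) := by
    apply hF_int.congr
    filter_upwards with ξ
    exact (hh_sq ξ).symm
  have hh_mem : MemLp h 2 volume :=
    (memLp_two_iff_integrable_sq hh_meas).2 hh2_int
  -- Cauchy–Schwarz
  have hpq : Real.HolderConjugate 2 2 := ⟨by norm_num, by norm_num, by norm_num⟩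
  have hofReal : ENNReal.ofReal (2:ℝ) = 2 := by norm_num
  have hCS : ∫ ξ : R2, w ξ * h ξ ≤
      (∫ ξ : R2, w ξ ^ (2:ℝ)) ^ ((1:ℝ)/2) * (∫ ξ : R2, h ξ ^ (2:ℝ)) ^ ((1:ℝ)/2) := by
    apply MeasureTheory.integral_mul_le_Lp_mul_Lq_of_nonneg hpq
    · filter_upwards with ξ; positivity
    · filter_upwards with ξ; positivity
    · rw [hofReal]; exact hw_mem
    · rw [hofReal]; exact hh_mem
  have hrpow2 : ∀ g : R2 → ℝ, (∫ ξ : R2, g ξ ^ (2:ℝ)) = ∫ ξ : R2, g ξ ^ 2 := by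
    intro g
    apply integral_congr_ae
    filter_upwards with ξ
    rw [Real.rpow_two]
  rw [hrpow2 w, hrpow2 h] at hCS
  -- bound on ∫ w²
  have hI_eq : ∫ ξ : R2, w ξ ^ 2 =
      2 * π * ∫ r in Ioi (0:ℝ), r * (Real.exp (-(2*t) * r ^ 2) / (1 + r ^ 2)) := by
    rw [← radial (fun r => Real.exp (-(2*t) * r ^ 2) / (1 + r ^ 2))]
    exact integral_congr_ae (Filter.Eventually.of_forall fun ξ => hw_sq ξ)
  have hI_le : ∫ ξ : R2, w ξ ^ 2 ≤ (2*π) ^ 2 * L := by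
    rw [hI_eq]
    have h1 := oneD_bound ht
    have hπ : (3:ℝ) ≤ π := by linarith [Real.pi_gt_three]
    calc 2 * π * ∫ r in Ioi (0:ℝ), r * (Real.exp (-(2*t) * r ^ 2) / (1 + r ^ 2))
        ≤ 2 * π * ((5/4) * L) := by
          apply mul_le_mul_of_nonneg_left h1 (by positivity)
      _ ≤ (2*π) ^ 2 * L := by
          have h2 : (0:ℝ) ≤ π * L * (4*π - 5/2) :=
            mul_nonneg (mul_nonneg Real.pi_pos.le hL0) (by linarith)
          nlinarith [h2]
  -- the square root bound
  have hIw_nonneg : 0 ≤ ∫ ξ : R2, w ξ ^ 2 := integral_nonneg fun ξ => sq_nonneg _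
  have hA_le : (∫ ξ : R2, w ξ ^ 2) ^ ((1:ℝ)/2) ≤ 2 * π * Real.sqrt L := by
    rw [← Real.sqrt_eq_rpow]
    calc Real.sqrt (∫ ξ : R2, w ξ ^ 2) ≤ Real.sqrt ((2*π) ^ 2 * L) :=
          Real.sqrt_le_sqrt hI_le
      _ = 2 * π * Real.sqrt L := by
          rw [Real.sqrt_mul (sq_nonneg _), Real.sqrt_sq (by positivity)]
  -- H¹ norm identification
  have hH_eq : (∫ ξ : R2, h ξ ^ 2) ^ ((1:ℝ)/2) = H1norm f := by
    rw [H1norm]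
    congr 1
    exact integral_congr_ae (Filter.Eventually.of_forall fun ξ => hh_sq ξ)
  have hH_nonneg : 0 ≤ H1norm f := by
    rw [H1norm]
    apply Real.rpow_nonneg
    exact integral_nonneg fun ξ => by positivity
  rw [hH_eq] at hCS
  have hwh_le : ∫ ξ : R2, w ξ * h ξ ≤ 2 * π * Real.sqrt L * H1norm f :=
    le_trans hCS (mul_le_mul_of_nonneg_right hA_le hH_nonneg)
  -- pointwise bound on heat
  have hnorm_c : ‖(1 / (2 * (π : ℂ)))‖ = 1 / (2 * π) := by
    simp [abs_of_pos Real.pi_pos]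
  have hkey : ∀ x : R2, ‖heat t f x‖ ≤ (1 / (2*π)) * ∫ ξ : R2, w ξ * h ξ := by
    intro x
    rw [heat, invFT, norm_mul, hnorm_c]
    apply mul_le_mul_of_nonneg_left _ (by positivity)
    calc ‖∫ ξ : R2, Complex.exp (Complex.I * ((inner ℝ x ξ : ℝ) : ℂ)) *
            (Complex.exp (-(t : ℂ) * (‖ξ‖ : ℂ) ^ 2) * FT f ξ)‖
        ≤ ∫ ξ : R2, ‖Complex.exp (Complex.I * ((inner ℝ x ξ : ℝ) : ℂ)) *
            (Complex.exp (-(t : ℂ) * (‖ξ‖ : ℂ) ^ 2) * FT f ξ)‖ :=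
          norm_integral_le_integral_norm _
      _ = ∫ ξ : R2, w ξ * h ξ := by
          apply integral_congr_ae
          filter_upwards with ξ
          rw [norm_mul, norm_mul]
          have e1 : ‖Complex.exp (Complex.I * ((inner ℝ x ξ : ℝ) : ℂ))‖ = 1 := by
            rw [Complex.norm_exp]
            simp
          have e2 : ‖Complex.exp (-(t : ℂ) * (‖ξ‖ : ℂ) ^ 2)‖ = Real.exp (-t * ‖ξ‖ ^ 2) := by
            rw [show (-(t:ℂ) * (‖ξ‖:ℂ) ^ 2) = ((-t * ‖ξ‖ ^ 2 : ℝ) : ℂ) by push_cast; ring]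
            rw [Complex.norm_exp, Complex.ofReal_re]
          rw [e1, e2, one_mul]
          have e3 : h ξ = Real.sqrt (1 + ‖ξ‖ ^ 2) * ‖FT f ξ‖ := by
            rw [hhdef]
            simp only
            rw [Real.sqrt_mul (hsq_pos ξ).le, Real.sqrt_sq (norm_nonneg _)]
          rw [e3, hwdef]
          simp only
          have hs : Real.sqrt (1 + ‖ξ‖ ^ 2) ≠ 0 := (Real.sqrt_pos.2 (hsq_pos ξ)).ne'
          field_simp
  -- conclude
  have hbound : ∀ᵐ x : R2 ∂volume, ‖heat t f x‖ ≤ Real.sqrt L * H1norm f := by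
    filter_upwards with x
    calc ‖heat t f x‖ ≤ (1 / (2*π)) * ∫ ξ : R2, w ξ * h ξ := hkey x
      _ ≤ (1 / (2*π)) * (2 * π * Real.sqrt L * H1norm f) :=
          mul_le_mul_of_nonneg_left hwh_le (by positivity)
      _ = Real.sqrt L * H1norm f := by
          field_simp
  have := MeasureTheory.eLpNorm_le_of_ae_bound (p := (⊤ : ENNReal)) (μ := volume) hbound
  simp only [ENNReal.toReal_top, inv_zero, ENNReal.rpow_zero, one_mul] at this
  calc eLpNorm (heat t f) ⊤ volume ≤ ENNReal.ofReal (Real.sqrt L * H1norm f) := this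
    _ = ENNReal.ofReal (1 * Real.sqrt L * H1norm f) := by rw [one_mul]
end
end

section
/- For all t > 0 and all f ∈ H¹(ℝ²), one has ‖e^{tΔ}f‖_{L^∞(ℝ²)} ≤ (e^t / (2√π)) (E₁(2t))^{1/2} ‖f‖_{H¹(ℝ²)}, where E₁(τ) = ∫_τ^∞ e^{-ρ}/ρ dρ is the exponential integral. -/
open MeasureTheory Real Set

noncomputable section

lemma image_eq_aux (t : ℝ) (ht : 0 < t) :
    (fun r : ℝ => 2*t*(1+r^2)) '' Ioi 0 = Ioi (2*t) := by
  ext ρ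
  constructor
  · rintro ⟨r, hr, rfl⟩
    simp only [mem_Ioi] at hr ⊢
    nlinarith [mul_pos (mul_pos two_pos ht) (pow_pos hr 2)]
  · intro hρ
    simp only [mem_Ioi] at hρ
    have h2 : (0:ℝ) ≤ ρ/(2*t) - 1 := by
      rw [sub_nonneg, le_div_iff₀ (by linarith)]; linarith
    refine ⟨Real.sqrt (ρ/(2*t) - 1), ?_, ?_⟩
    · simp only [mem_Ioi]
      apply Real.sqrt_pos.2
      rw [sub_pos, lt_div_iff₀ (by linarith)]
      linarith
    · show 2*t*(1 + Real.sqrt (ρ/(2*t) - 1) ^ 2) = ρ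
      rw [Real.sq_sqrt h2]
      field_simp
      ring

lemma radial_int_aux (t : ℝ) (ht : 0 < t) :
    ∫ y in Ioi (0:ℝ), y * (Real.exp (-(2*t)*y^2) / (1+y^2)) = Real.exp (2*t) * E1 (2*t) / 2 := by
  have hderiv : ∀ r ∈ Ioi (0:ℝ), HasDerivWithinAt (fun r : ℝ => 2*t*(1+r^2)) (4*t*r) (Ioi 0) r := by
    intro r hr
    have h1 : HasDerivAt (fun r : ℝ => 2*t*(1+r^2)) (4*t*r) r := by
      have h2 := (((hasDerivAt_id r).pow 2).const_add 1).const_mul (2*t)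
      simp only [id] at h2
      refine h2.congr_deriv ?_
      norm_num
      ring
    exact h1.hasDerivWithinAt
  have hinj : InjOn (fun r : ℝ => 2*t*(1+r^2)) (Ioi 0) := by
    intro a ha b hb hab
    simp only [mem_Ioi] at ha hb
    simp only at hab
    have h2 : a^2 = b^2 := by
      have := mul_left_cancel₀ (show (2*t) ≠ 0 by linarith) hab
      linarith
    nlinarith [sq_nonneg (a-b)]
  have key := integral_image_eq_integral_abs_deriv_smul measurableSet_Ioi hderiv hinj
    (fun ρ => Real.exp (-ρ) / ρ)
  rw [image_eq_aux t ht] at key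
  have hcong : E1 (2*t) = ∫ r in Ioi (0:ℝ),
      2 * Real.exp (-(2*t)) * (r * (Real.exp (-(2*t)*r^2) / (1+r^2))) := by
    rw [E1, key]
    refine setIntegral_congr_fun measurableSet_Ioi fun r hr => ?_
    simp only [mem_Ioi] at hr
    have h1 : (0:ℝ) < 1 + r^2 := by positivity
    rw [smul_eq_mul, abs_of_pos (by positivity)]
    rw [show -(2*t*(1+r^2)) = -(2*t) + -(2*t)*r^2 by ring, Real.exp_add]
    field_simp
    ring
  rw [integral_const_mul] at hcong
  have hexp : Real.exp (2*t) * Real.exp (-(2*t)) = 1 := by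
    rw [← Real.exp_add]; simp
  rw [eq_div_iff (two_ne_zero : (2:ℝ) ≠ 0), hcong]
  linear_combination (-2 * (∫ y in Ioi (0:ℝ), y * (Real.exp (-(2*t)*y^2) / (1+y^2)))) * hexp

lemma gauss_int_aux (t : ℝ) (ht : 0 < t) :
    ∫ ξ : R2, Real.exp (-(2*t)*‖ξ‖^2) / (1+‖ξ‖^2) = π * (Real.exp (2*t) * E1 (2*t)) := by
  have h := MeasureTheory.integral_fun_norm_addHaar (volume : Measure R2)
    (fun y => Real.exp (-(2*t)*y^2) / (1+y^2))
  have hball : (volume (Metric.ball (0:R2) 1)).toReal = π := by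
    rw [EuclideanSpace.volume_ball]
    norm_num [Real.Gamma_two, Real.sq_sqrt Real.pi_pos.le, Real.pi_pos.le]
  rw [h, finrank_euclideanSpace, Fintype.card_fin, measureReal_def, hball]
  simp only [show (2-1:ℕ)=1 from rfl, pow_one, smul_eq_mul, nsmul_eq_mul, Nat.cast_ofNat]
  rw [show (∫ y in Ioi (0:ℝ), y * (Real.exp (-(2*t)*y^2) / (1+y^2)))
      = Real.exp (2*t) * E1 (2*t) / 2 from radial_int_aux t ht]
  ring

lemma gauss_integrable_aux (b : ℝ) (hb : 0 < b) :
    Integrable (fun v : R2 => Real.exp (-b * ‖v‖^2)) := by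
  have h := GaussianFourier.integrable_cexp_neg_mul_sq_norm_add (V := R2) (b := (b:ℂ))
    (by simpa using hb) 0 0
  refine h.norm.congr ?_
  filter_upwards with v
  simp [Complex.norm_exp, ← Complex.ofReal_pow]

theorem stmt1 (t : ℝ) (ht : 0 < t) (f : R2 → ℂ) (hf : MemH1 f) :
    eLpNorm (heat t f) ⊤ volume ≤
      ENNReal.ofReal (Real.exp t / (2 * Real.sqrt π) * Real.sqrt (E1 (2 * t)) * H1norm f) := by
  set F1 : R2 → ℝ := fun ξ => Real.exp (-t*‖ξ‖^2) / Real.sqrt (1+‖ξ‖^2) with hF1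
  set F2 : R2 → ℝ := fun ξ => Real.sqrt (1+‖ξ‖^2) * ‖FT f ξ‖ with hF2
  set B : ℝ := ∫ ξ : R2, (1 + ‖ξ‖ ^ 2) * ‖FT f ξ‖ ^ 2 with hB
  have hBnn : 0 ≤ B := integral_nonneg fun ξ => by positivity
  have hE1nn : 0 ≤ E1 (2*t) := by
    apply setIntegral_nonneg measurableSet_Ioi
    intro ρ hρ
    simp only [mem_Ioi] at hρ
    have : 0 < ρ := by linarith
    positivity
  -- measurability of ‖FT f‖
  have hFTm : AEStronglyMeasurable (fun ξ : R2 => ‖FT f ξ‖) volume := by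
    have h1 := hf.2.aestronglyMeasurable
    have hc : Continuous (fun ξ : R2 => (1 + ‖ξ‖^2)) := by continuity
    have h2 : AEStronglyMeasurable
        (fun ξ : R2 => Real.sqrt (((1 + ‖ξ‖^2) * ‖FT f ξ‖^2) / (1 + ‖ξ‖^2))) volume :=
      ((continuous_sqrt.measurable.comp_aemeasurable
        (h1.aemeasurable.div hc.aemeasurable))).aestronglyMeasurable
    refine h2.congr ?_
    filter_upwards with ξ
    have hpos : (0:ℝ) < 1 + ‖ξ‖^2 := by positivity
    rw [mul_div_cancel_left₀ _ hpos.ne', Real.sqrt_sq (norm_nonneg _)]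
  -- F1 squared
  have hF1sq : ∀ ξ : R2, F1 ξ ^ 2 = Real.exp (-(2*t)*‖ξ‖^2) / (1+‖ξ‖^2) := by
    intro ξ
    rw [hF1]
    have hpos : (0:ℝ) ≤ 1 + ‖ξ‖^2 := by positivity
    rw [div_pow, Real.sq_sqrt hpos, pow_two, ← Real.exp_add]
    ring_nf
  have hF1cont : Continuous F1 := by
    apply Continuous.div
    · continuity
    · continuity
    · intro ξ; positivity
  -- Memℒp F1
  have hmemF1 : MemLp F1 (ENNReal.ofReal 2) volume := by
    rw [show ENNReal.ofReal 2 = 2 by norm_num]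
    rw [memLp_two_iff_integrable_sq hF1cont.aestronglyMeasurable]
    refine (gauss_integrable_aux (2*t) (by linarith)).mono
      ((hF1cont.pow 2).aestronglyMeasurable) ?_
    filter_upwards with ξ
    rw [hF1sq ξ]
    have h1 : (0:ℝ) < 1 + ‖ξ‖^2 := by positivity
    rw [Real.norm_of_nonneg (by positivity), Real.norm_of_nonneg (Real.exp_nonneg _)]
    rw [div_le_iff₀ h1]
    nlinarith [Real.exp_nonneg (-(2*t)*‖ξ‖^2), sq_nonneg ‖ξ‖]
  -- Memℒp F2
  have hmemF2 : MemLp F2 (ENNReal.ofReal 2) volume := by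
    rw [show ENNReal.ofReal 2 = 2 by norm_num]
    have hF2m : AEStronglyMeasurable F2 volume :=
      ((continuous_sqrt.comp (by continuity : Continuous fun ξ : R2 => 1 + ‖ξ‖^2))
        |>.aestronglyMeasurable).mul hFTm
    rw [memLp_two_iff_integrable_sq hF2m]
    refine hf.2.congr ?_
    filter_upwards with ξ
    rw [hF2]
    have hpos : (0:ℝ) ≤ 1 + ‖ξ‖^2 := by positivity
    simp only [mul_pow, Real.sq_sqrt hpos]
  -- Hölder
  have holder := integral_mul_le_Lp_mul_Lq_of_nonneg
    Real.HolderConjugate.two_two (μ := volume)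
    (f := F1) (g := F2)
    (Filter.Eventually.of_forall fun ξ => by rw [hF1]; positivity)
    (Filter.Eventually.of_forall fun ξ => by rw [hF2]; positivity)
    hmemF1 hmemF2
  -- convert rpow to pow and evaluate integrals
  have hrpow : ∀ y : ℝ, y ^ (2:ℝ) = y ^ 2 := fun y => by
    rw [show (2:ℝ) = ((2:ℕ):ℝ) by norm_num, Real.rpow_natCast]
  have hA : (∫ ξ : R2, F1 ξ ^ (2:ℝ)) = π * (Real.exp (2*t) * E1 (2*t)) := by
    rw [← gauss_int_aux t ht]
    refine integral_congr_ae (Filter.Eventually.of_forall fun ξ => ?_)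
    simp only [hrpow, hF1sq]
  have hBeq : (∫ ξ : R2, F2 ξ ^ (2:ℝ)) = B := by
    rw [hB]
    refine integral_congr_ae (Filter.Eventually.of_forall fun ξ => ?_)
    simp only [hrpow, hF2]
    have hpos : (0:ℝ) ≤ 1 + ‖ξ‖^2 := by positivity
    simp only [mul_pow, Real.sq_sqrt hpos]
  rw [hA, hBeq] at holder
  -- constant computation
  have hsqrtpi : (0:ℝ) < Real.sqrt π := Real.sqrt_pos.2 Real.pi_pos
  have hππ : Real.sqrt π * Real.sqrt π = π := Real.mul_self_sqrt Real.pi_pos.le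
  have hconst : 1/(2*π) * ((π * (Real.exp (2*t) * E1 (2*t))) ^ (1/2:ℝ) * B ^ (1/2:ℝ))
      = Real.exp t / (2 * Real.sqrt π) * Real.sqrt (E1 (2 * t)) * B ^ (1/2:ℝ) := by
    have hse : Real.sqrt (Real.exp (2*t)) = Real.exp t := by
      rw [show Real.exp (2*t) = Real.exp t * Real.exp t by rw [← Real.exp_add]; ring_nf]
      exact Real.sqrt_mul_self (Real.exp_nonneg _)
    rw [← Real.sqrt_eq_rpow]
    rw [Real.sqrt_mul Real.pi_pos.le, Real.sqrt_mul (Real.exp_nonneg _), hse]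
    have hπ0 : π ≠ 0 := Real.pi_pos.ne'
    field_simp
    linear_combination (Real.sqrt (E1 (2*t)) * B^(1/2:ℝ)) * hππ
  -- pointwise bound
  have hbound : ∀ x : R2, ‖heat t f x‖ ≤
      Real.exp t / (2 * Real.sqrt π) * Real.sqrt (E1 (2 * t)) * B ^ (1/2:ℝ) := by
    intro x
    have hnorm : ‖(1 / (2 * (π:ℂ)))‖ = 1/(2*π) := by
      rw [show (2 * (π:ℂ)) = ((2*π : ℝ) : ℂ) by push_cast; ring]
      simp [abs_of_pos Real.two_pi_pos, Real.pi_pos.le]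
    have step1 : ‖heat t f x‖ ≤ (1/(2*π)) * ∫ ξ : R2, F1 ξ * F2 ξ := by
      rw [heat, invFT, norm_mul, hnorm]
      refine mul_le_mul_of_nonneg_left ?_ (div_nonneg zero_le_one (by linarith [Real.pi_pos]))
      calc ‖∫ ξ : R2, Complex.exp (Complex.I * ((inner ℝ x ξ : ℝ) : ℂ)) *
            (Complex.exp (-(t : ℂ) * (‖ξ‖ : ℂ) ^ 2) * FT f ξ)‖
          ≤ ∫ ξ : R2, ‖Complex.exp (Complex.I * ((inner ℝ x ξ : ℝ) : ℂ)) *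
            (Complex.exp (-(t : ℂ) * (‖ξ‖ : ℂ) ^ 2) * FT f ξ)‖ := norm_integral_le_integral_norm _
        _ = _ := by
            refine integral_congr_ae (Filter.Eventually.of_forall fun ξ => ?_)
            have hs : Real.sqrt (1+‖ξ‖^2) ≠ 0 := by positivity
            have e1 : ‖Complex.exp (Complex.I * ((inner ℝ x ξ : ℝ) : ℂ))‖ = 1 := by
              rw [Complex.norm_exp]; simp
            have e2 : ‖Complex.exp (-(t:ℂ) * (‖ξ‖:ℂ)^2)‖ = Real.exp (-t*‖ξ‖^2) := by
              rw [show (-(t:ℂ) * (‖ξ‖:ℂ)^2) = ((-t * ‖ξ‖^2 : ℝ) : ℂ) by push_cast; ring]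
              rw [Complex.norm_exp]
              simp [← Complex.ofReal_pow]
            simp only [norm_mul, e1, e2, one_mul, hF1, hF2]
            field_simp
    calc ‖heat t f x‖ ≤ (1/(2*π)) * ∫ ξ : R2, F1 ξ * F2 ξ := step1
      _ ≤ (1/(2*π)) * ((π * (Real.exp (2*t) * E1 (2*t))) ^ ((1:ℝ)/2) * B ^ ((1:ℝ)/2)) := by
          refine mul_le_mul_of_nonneg_left ?_ (div_nonneg zero_le_one (by linarith [Real.pi_pos]))
          exact holder
      _ = _ := hconst
  rw [eLpNorm_exponent_top]
  refine le_trans (eLpNormEssSup_le_of_ae_bound (C := Real.exp t / (2 * Real.sqrt π) *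
    Real.sqrt (E1 (2 * t)) * B ^ (1/2:ℝ)) (Filter.Eventually.of_forall hbound)) ?_
  rw [H1norm, ← hB]
end
end

section
/- For every t > 0, the exponential integral satisfies E₁(2t) ≤ (e^{2/e}/2) · log(e + 1/t). -/
open MeasureTheory Real Set

noncomputable section

lemma aux_exp_neg_int (a : ℝ) : IntegrableOn (fun x => Real.exp (-x)) (Ioi a) := by
  simpa using exp_neg_integrableOn_Ioi a one_pos

lemma E1_integrable {τ : ℝ} (hτ : 0 < τ) :
    IntegrableOn (fun ρ => Real.exp (-ρ) / ρ) (Ioi τ) := by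
  refine Integrable.mono' ((aux_exp_neg_int τ).mul_const τ⁻¹) ?_ ?_
  · exact ((Real.measurable_exp.comp measurable_neg).div measurable_id).aestronglyMeasurable
  · filter_upwards [ae_restrict_mem measurableSet_Ioi] with x hx
    have hx' : τ < x := hx
    have h1 : Real.exp (-x) / x ≤ Real.exp (-x) / τ :=
      div_le_div_of_nonneg_left (Real.exp_pos _).le hτ hx'.le
    rw [Real.norm_eq_abs, abs_of_nonneg (div_nonneg (Real.exp_pos _).le (by linarith))]
    rw [div_eq_mul_inv] at h1
    exact h1

theorem stmt4 (t : ℝ) (ht : 0 < t) :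
    E1 (2 * t) ≤ Real.exp (2 / Real.exp 1) / 2 * Real.log (Real.exp 1 + 1 / t) := by
  have hc2 : (2:ℝ) ≤ Real.exp (2 / Real.exp 1) := by
    have h1 : Real.log 2 ≤ 2 / Real.exp 1 := by
      rw [le_div_iff₀ (Real.exp_pos 1)]
      nlinarith [Real.log_two_lt_d9, Real.exp_one_lt_d9, Real.log_two_gt_d9,
        Real.exp_one_gt_d9]
    calc (2:ℝ) = Real.exp (Real.log 2) := (Real.exp_log two_pos).symm
      _ ≤ _ := Real.exp_le_exp.mpr h1
  have hc : (1:ℝ) ≤ Real.exp (2 / Real.exp 1) / 2 := by linarith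
  have h1t : (0:ℝ) < 1 / t := by positivity
  have hlog1 : (1:ℝ) ≤ Real.log (Real.exp 1 + 1 / t) := by
    calc (1:ℝ) = Real.log (Real.exp 1) := by simp
      _ ≤ _ := Real.log_le_log (Real.exp_pos 1) (by linarith)
  rcases le_or_gt 1 (2 * t) with h1 | h1
  · -- big τ case
    have hE : E1 (2 * t) ≤ Real.exp (-(2 * t)) := by
      rw [E1, ← integral_exp_neg_Ioi]
      refine setIntegral_mono_on (E1_integrable (by linarith)) (aux_exp_neg_int _)
        measurableSet_Ioi ?_
      intro x hx
      have hx1 : (1:ℝ) ≤ x := by have : 2 * t < x := hx; linarith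
      rw [div_le_iff₀ (by linarith)]
      nlinarith [Real.exp_pos (-x)]
    have h2 : Real.exp (-(2 * t)) ≤ 1 := Real.exp_le_one_iff.mpr (by linarith)
    nlinarith
  · -- small τ case: split at 1
    have hτ : 0 < 2 * t := by linarith
    have hint1 : IntegrableOn (fun ρ => Real.exp (-ρ) / ρ) (Ioc (2 * t) 1) :=
      (E1_integrable hτ).mono_set Ioc_subset_Ioi_self
    have hint2 : IntegrableOn (fun ρ => Real.exp (-ρ) / ρ) (Ioi 1) :=
      E1_integrable one_pos
    have hsplit : E1 (2 * t) = (∫ ρ in Ioc (2 * t) 1, Real.exp (-ρ) / ρ)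
        + ∫ ρ in Ioi 1, Real.exp (-ρ) / ρ := by
      rw [E1, ← setIntegral_union (Ioc_disjoint_Ioi le_rfl) measurableSet_Ioi hint1 hint2,
        Ioc_union_Ioi_eq_Ioi h1.le]
    have hinv : IntegrableOn (fun ρ : ℝ => ρ⁻¹) (Ioc (2 * t) 1) := by
      rw [← intervalIntegrable_iff_integrableOn_Ioc_of_le h1.le]
      refine intervalIntegral.intervalIntegrable_inv ?_ continuousOn_id
      intro x hx
      rw [uIcc_of_le h1.le] at hx
      exact ne_of_gt (lt_of_lt_of_le hτ hx.1)
    have hA : (∫ ρ in Ioc (2 * t) 1, Real.exp (-ρ) / ρ) ≤ - Real.log (2 * t) := by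
      have step : (∫ ρ in Ioc (2 * t) 1, Real.exp (-ρ) / ρ)
          ≤ ∫ ρ in Ioc (2 * t) 1, ρ⁻¹ := by
        refine setIntegral_mono_on hint1 hinv measurableSet_Ioc ?_
        intro x hx
        have hx0 : 0 < x := lt_of_lt_of_le hτ hx.1.le
        rw [div_le_iff₀ hx0, inv_mul_cancel₀ hx0.ne']
        exact Real.exp_le_one_iff.mpr (by linarith)
      have val : (∫ ρ in Ioc (2 * t) 1, (ρ:ℝ)⁻¹) = - Real.log (2 * t) := by
        rw [← intervalIntegral.integral_of_le h1.le, integral_inv_of_pos hτ one_pos,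
          one_div, Real.log_inv]
      linarith [step, val.le, val.ge]
    have hB : (∫ ρ in Ioi 1, Real.exp (-ρ) / ρ) ≤ Real.exp (-1) := by
      rw [← integral_exp_neg_Ioi]
      refine setIntegral_mono_on hint2 (aux_exp_neg_int _) measurableSet_Ioi ?_
      intro x hx
      have hx1 : (1:ℝ) < x := hx
      rw [div_le_iff₀ (by linarith)]
      nlinarith [Real.exp_pos (-x)]
    have hlog2t : Real.log (2 * t) = Real.log 2 + Real.log t :=
      Real.log_mul two_ne_zero ht.ne'
    have hexpinv : Real.exp (-1) < Real.log 2 := by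
      rw [Real.exp_neg]
      have h := Real.exp_one_gt_d9
      have h2 := Real.log_two_gt_d9
      have : (Real.exp 1)⁻¹ < 0.4 := by
        rw [inv_lt_comm₀ (Real.exp_pos 1) (by norm_num)]
        linarith
      linarith
    have hloglt : Real.log (1 / t) ≤ Real.log (Real.exp 1 + 1 / t) :=
      Real.log_le_log h1t (by linarith [Real.exp_pos 1])
    have hlog1t : Real.log (1 / t) = - Real.log t := by
      rw [one_div, Real.log_inv]
    have key : E1 (2 * t) ≤ Real.log (Real.exp 1 + 1 / t) := by
      rw [hsplit]
      have : - Real.log (2 * t) + Real.exp (-1) ≤ - Real.log t := by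
        rw [hlog2t]; linarith
      linarith
    calc E1 (2 * t) ≤ Real.log (Real.exp 1 + 1 / t) := key
      _ = 1 * Real.log (Real.exp 1 + 1 / t) := (one_mul _).symm
      _ ≤ Real.exp (2 / Real.exp 1) / 2 * Real.log (Real.exp 1 + 1 / t) := by
          apply mul_le_mul_of_nonneg_right hc (by linarith)
end
end

section
/- For all t > 0 and all f ∈ H¹(ℝ²), one has ‖e^{tΔ}f‖_{L^∞(ℝ²)} ≤ (2π)^{-1/2} (log(e + 1/t))^{1/2} ‖f‖_{H¹(ℝ²)}. -/
open MeasureTheory Real Set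

noncomputable section

namespace Stmt8Aux

lemma gauss_int (b : ℝ) (hb : 0 < b) : Integrable (fun ξ : R2 => Real.exp (-b * ‖ξ‖^2)) := by
  have h := (GaussianFourier.integrable_cexp_neg_mul_sq_norm_add (V := R2)
      (b := (b:ℂ)) (by simpa using hb) 0 (0 : R2)).norm
  refine h.congr (Filter.Eventually.of_forall fun v => ?_)
  simp [Complex.norm_exp]
  norm_cast
  exact Or.inl rfl

lemma polar_eq (g : ℝ → ℝ) : ∫ ξ : R2, g ‖ξ‖ = (2 * π) * ∫ y in Ioi (0:ℝ), y * g y := by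
  rw [MeasureTheory.integral_fun_norm_addHaar (volume : Measure R2) g]
  rw [finrank_euclideanSpace_fin]
  have hball : (volume (Metric.ball (0:R2) 1)).toReal = π := by
    rw [EuclideanSpace.volume_ball]
    norm_num [Fintype.card_fin, Real.sq_sqrt pi_nonneg, Real.Gamma_two, pi_nonneg]
  rw [measureReal_def, hball]
  norm_num [smul_eq_mul]
  ring

lemma line_bound (t : ℝ) (ht : 0 < t) :
    ∫ y in Ioi (0:ℝ), y * (Real.exp (-(2*t) * y^2) / (1 + y^2)) ≤
      Real.log (Real.exp 1 + 1/t) := by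
  set L := Real.log (Real.exp 1 + 1/t) with hLdef
  have h2t : 0 < 2*t := by linarith
  have hL : 1 ≤ L := by
    have h1t : 0 < 1/t := by positivity
    have : Real.exp 1 ≤ Real.exp 1 + 1/t := by linarith
    calc (1:ℝ) = Real.log (Real.exp 1) := (Real.log_exp 1).symm
    _ ≤ L := Real.log_le_log (Real.exp_pos 1) this
  set h : ℝ → ℝ := fun y => y * (Real.exp (-(2*t) * y^2) / (1 + y^2)) with hdef
  have hcont : Continuous h := by
    apply continuous_id.mul (Continuous.div (by continuity) (by continuity)
      (fun y => by positivity))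
  have hint : Integrable h := by
    refine ((integrable_mul_exp_neg_mul_sq h2t).abs).mono' hcont.aestronglyMeasurable
      (Filter.Eventually.of_forall fun y => ?_)
    have h1 : (0:ℝ) < 1 + y^2 := by positivity
    have : |h y| = |y| * (Real.exp (-(2*t)*y^2) / (1+y^2)) := by
      rw [abs_mul, abs_of_nonneg (by positivity : (0:ℝ) ≤ Real.exp (-(2*t)*y^2) / (1+y^2))]
    rw [Real.norm_eq_abs, this, abs_mul, abs_of_nonneg (Real.exp_pos _).le]
    gcongr
    exact div_le_self (Real.exp_pos _).le (by nlinarith)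
  set R := Real.sqrt t⁻¹ with hRdef
  have hRpos : 0 < R := Real.sqrt_pos.2 (by positivity)
  have hR2 : R^2 = t⁻¹ := Real.sq_sqrt (by positivity)
  rw [← Ioc_union_Ioi_eq_Ioi hRpos.le,
    setIntegral_union (Ioc_disjoint_Ioi le_rfl) measurableSet_Ioi
      hint.integrableOn hint.integrableOn]
  have headle : ∫ y in Ioc 0 R, h y ≤ ∫ y in Ioc 0 R, y / (1 + y^2) := by
    refine setIntegral_mono_on hint.integrableOn
      ((Continuous.div continuous_id (by continuity) (fun y => by positivity)).integrableOn_Ioc)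
      measurableSet_Ioc (fun y hy => ?_)
    have hy0 : 0 ≤ y := hy.1.le
    have : Real.exp (-(2*t)*y^2) ≤ 1 := Real.exp_le_one_iff.2 (by nlinarith)
    have hh : Real.exp (-(2*t)*y^2) / (1+y^2) ≤ 1 / (1+y^2) := by gcongr
    calc h y = y * (Real.exp (-(2*t)*y^2) / (1+y^2)) := rfl
    _ ≤ y * (1 / (1+y^2)) := mul_le_mul_of_nonneg_left hh hy0
    _ = y / (1+y^2) := by ring
  have headval : ∫ y in Ioc 0 R, y / (1 + y^2) = (1/2) * Real.log (1 + R^2) := by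
    rw [← intervalIntegral.integral_of_le hRpos.le]
    have hFTC := intervalIntegral.integral_eq_sub_of_hasDerivAt
      (f := fun y : ℝ => (1/2) * Real.log (1+y^2)) (f' := fun y : ℝ => y/(1+y^2)) (a := 0) (b := R)
      (fun y _ => ?_)
      ((Continuous.div continuous_id (by continuity)
        (fun y => by positivity)).intervalIntegrable _ _)
    · rw [hFTC]; norm_num
    · have h1 : HasDerivAt (fun y : ℝ => 1 + y^2) (2*y) y := by
        simpa using ((hasDerivAt_pow 2 y).const_add 1)
      have h2 := (Real.hasDerivAt_log (ne_of_gt (by positivity : (0:ℝ) < 1+y^2))).comp y h1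
      have h3 := h2.const_mul (1/2 : ℝ)
      convert h3 using 1
      · rfl
      · rfl
      · field_simp
  have headbound : ∫ y in Ioc 0 R, h y ≤ (1/2) * L := by
    rw [hLdef]
    calc ∫ y in Ioc 0 R, h y ≤ (1/2) * Real.log (1 + R^2) := headle.trans_eq headval
    _ ≤ (1/2) * Real.log (Real.exp 1 + 1/t) := by
        have harg : (1:ℝ) + R^2 ≤ Real.exp 1 + 1/t := by
          rw [hR2, one_div]
          have := Real.exp_one_gt_d9
          linarith
        have := Real.log_le_log (by positivity : (0:ℝ) < 1 + R^2) harg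
        linarith
  have tailint : Integrable (fun y : ℝ => t * (y * Real.exp (-(2*t)*y^2))) :=
    (integrable_mul_exp_neg_mul_sq h2t).const_mul t
  have taille : ∫ y in Ioi R, h y ≤ ∫ y in Ioi R, t * (y * Real.exp (-(2*t)*y^2)) := by
    refine setIntegral_mono_on hint.integrableOn tailint.integrableOn
      measurableSet_Ioi (fun y hy => ?_)
    have hy0 : R < y := hy
    have hyy : t⁻¹ ≤ y^2 := by nlinarith [hR2]
    have hinv : (1+y^2)⁻¹ ≤ t := by
      have h1 : t⁻¹ ≤ 1 + y^2 := by linarith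
      have h2 := inv_anti₀ (by positivity : (0:ℝ) < t⁻¹) h1
      simpa using h2
    calc h y = (y * Real.exp (-(2*t)*y^2)) * (1+y^2)⁻¹ := by rw [hdef]; ring
    _ ≤ (y * Real.exp (-(2*t)*y^2)) * t := by
        have hy0' : (0:ℝ) ≤ y * Real.exp (-(2*t)*y^2) := by
          have : (0:ℝ) < y := lt_trans hRpos hy0
          positivity
        exact mul_le_mul_of_nonneg_left hinv hy0'
    _ = t * (y * Real.exp (-(2*t)*y^2)) := by ring
  have tailval : ∫ y in Ioi R, y * Real.exp (-(2*t)*y^2) = (1/(4*t)) * Real.exp (-2) := by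
    have hFTC := MeasureTheory.integral_Ioi_of_hasDerivAt_of_tendsto'
      (f := fun y : ℝ => -(1/(4*t)) * Real.exp (-(2*t)*y^2))
      (f' := fun y : ℝ => y * Real.exp (-(2*t)*y^2)) (a := R) (m := 0)
      (fun y _ => ?_) (integrable_mul_exp_neg_mul_sq h2t).integrableOn ?_
    · have hexp : Real.exp (-(2*t)*R^2) = Real.exp (-2) := by
        rw [hR2]; congr 1; field_simp
      rw [hFTC]; simp only [hexp]; ring
    · have h1 : HasDerivAt (fun y : ℝ => -(2*t)*y^2) (-(2*t)*(2*y)) y := by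
        simpa using ((hasDerivAt_pow 2 y).const_mul (-(2*t)))
      have h2 := (h1.exp).const_mul (-(1/(4*t)))
      convert h2 using 1
      · rfl
      · have htne : t ≠ 0 := ht.ne'
        field_simp
        ring
    · have h1 : Filter.Tendsto (fun y : ℝ => -(2*t)*y^2) Filter.atTop Filter.atBot := by
        apply Filter.Tendsto.const_mul_atTop_of_neg (by linarith : -(2*t) < 0)
        exact Filter.tendsto_pow_atTop (by norm_num)
      have h2 := Real.tendsto_exp_atBot.comp h1
      have h3 := h2.const_mul (-(1/(4*t)))
      simpa using h3
  have tailbound : ∫ y in Ioi R, h y ≤ 1/4 := by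
    calc ∫ y in Ioi R, h y ≤ ∫ y in Ioi R, t * (y * Real.exp (-(2*t)*y^2)) := taille
    _ = t * ∫ y in Ioi R, y * Real.exp (-(2*t)*y^2) := integral_const_mul t _
    _ = t * ((1/(4*t)) * Real.exp (-2)) := by rw [tailval]
    _ = Real.exp (-2) / 4 := by field_simp
    _ ≤ 1/4 := by
        have : Real.exp (-2) ≤ 1 := Real.exp_le_one_iff.2 (by norm_num)
        linarith
  linarith

lemma radial_bound (t : ℝ) (ht : 0 < t) :
    ∫ ξ : R2, Real.exp (-(2*t) * ‖ξ‖^2) / (1 + ‖ξ‖^2) ≤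
      2 * π * Real.log (Real.exp 1 + 1/t) := by
  have h := polar_eq (fun y => Real.exp (-(2*t) * y^2) / (1 + y^2))
  rw [h]
  have h2 := line_bound t ht
  have h2π : (0:ℝ) ≤ 2 * π := by positivity
  calc (2*π) * ∫ y in Ioi (0:ℝ), y * (Real.exp (-(2*t) * y^2) / (1 + y^2))
      ≤ (2*π) * Real.log (Real.exp 1 + 1/t) := mul_le_mul_of_nonneg_left h2 h2π
    _ = 2 * π * Real.log (Real.exp 1 + 1/t) := by ring

end Stmt8Aux

open Stmt8Aux in
theorem stmt8 (t : ℝ) (ht : 0 < t) (f : R2 → ℂ) (hf : MemH1 f) :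
    eLpNorm (heat t f) ⊤ volume ≤
      ENNReal.ofReal ((2 * π) ^ (-(1 / 2 : ℝ)) *
        Real.sqrt (Real.log (Real.exp 1 + 1 / t)) * H1norm f) := by
  have hw : Integrable (fun ξ : R2 => (1 + ‖ξ‖^2) * ‖FT f ξ‖^2) := hf.2
  set L := Real.log (Real.exp 1 + 1/t) with hLdef
  have hL : 1 ≤ L := by
    have h1t : 0 < 1/t := by positivity
    have h2 : Real.exp 1 ≤ Real.exp 1 + 1/t := by linarith
    calc (1:ℝ) = Real.log (Real.exp 1) := (Real.log_exp 1).symm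
    _ ≤ L := Real.log_le_log (Real.exp_pos 1) h2
  set F : R2 → ℝ := fun ξ => ‖FT f ξ‖ with hFdef
  have hFmeas : AEStronglyMeasurable F volume := by
    have h1 : AEStronglyMeasurable
        (fun ξ : R2 => Real.sqrt (((1 + ‖ξ‖^2) * ‖FT f ξ‖^2) / (1 + ‖ξ‖^2))) volume := by
      apply Real.continuous_sqrt.comp_aestronglyMeasurable
      exact (hw.aemeasurable.div (Continuous.aemeasurable (by continuity))).aestronglyMeasurable
    refine h1.congr (Filter.Eventually.of_forall fun ξ => ?_)
    have h2 : (0:ℝ) < 1 + ‖ξ‖^2 := by positivity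
    show Real.sqrt (((1 + ‖ξ‖^2) * ‖FT f ξ‖^2) / (1 + ‖ξ‖^2)) = ‖FT f ξ‖
    have h3 : ((1 + ‖ξ‖^2) * ‖FT f ξ‖^2) / (1 + ‖ξ‖^2) = ‖FT f ξ‖^2 := by
      field_simp
    rw [h3, Real.sqrt_sq (norm_nonneg _)]
  have hsq : ∀ ξ : R2, Real.sqrt (1 + ‖ξ‖^2) ^ 2 = 1 + ‖ξ‖^2 :=
    fun ξ => Real.sq_sqrt (by positivity)
  have hsqpos : ∀ ξ : R2, 0 < Real.sqrt (1 + ‖ξ‖^2) :=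
    fun ξ => Real.sqrt_pos.2 (by positivity)
  set ψ : R2 → ℝ := fun ξ => Real.sqrt (1 + ‖ξ‖^2) * F ξ with hψdef
  set φ : R2 → ℝ := fun ξ => Real.exp (-(t * ‖ξ‖^2)) / Real.sqrt (1 + ‖ξ‖^2) with hφdef
  have hφcont : Continuous φ := by
    apply Continuous.div (by continuity) (Real.continuous_sqrt.comp (by continuity))
    exact fun ξ => (hsqpos ξ).ne'
  have hψmem : MemLp ψ 2 volume := by
    refine (memLp_two_iff_integrable_sq ?_).2 ?_
    · exact ((Real.continuous_sqrt.comp (by continuity)).aestronglyMeasurable).mul hFmeas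
    · refine hw.congr (Filter.Eventually.of_forall fun ξ => ?_)
      rw [hψdef]
      simp only [mul_pow, hsq]
      rfl
  have hφsq : ∀ ξ : R2, φ ξ ^ 2 = Real.exp (-(2*t) * ‖ξ‖^2) / (1 + ‖ξ‖^2) := by
    intro ξ
    rw [hφdef]
    simp only [div_pow, hsq, sq (Real.exp _), ← Real.exp_add]
    congr 2
    ring
  have hφmem : MemLp φ 2 volume := by
    refine (memLp_two_iff_integrable_sq hφcont.aestronglyMeasurable).2 ?_
    refine (gauss_int (2*t) (by linarith)).mono' (hφcont.pow 2).aestronglyMeasurable ?_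
    refine Filter.Eventually.of_forall fun ξ => ?_
    rw [Real.norm_eq_abs, hφsq ξ, abs_of_nonneg (by positivity)]
    have h2 : (0:ℝ) < 1 + ‖ξ‖^2 := by positivity
    have : (1:ℝ) ≤ 1 + ‖ξ‖^2 := by nlinarith [sq_nonneg ‖ξ‖]
    exact div_le_self (Real.exp_pos _).le this
  have hpq : Real.HolderConjugate 2 2 := Real.holderConjugate_iff_eq_conjExponent (by norm_num) |>.2 (by norm_num)
  have hof : ENNReal.ofReal (2:ℝ) = 2 := by norm_num
  have hφmem' : MemLp φ (ENNReal.ofReal (2:ℝ)) volume := by rw [hof]; exact hφmem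
  have hψmem' : MemLp ψ (ENNReal.ofReal (2:ℝ)) volume := by rw [hof]; exact hψmem
  have hCS := MeasureTheory.integral_mul_le_Lp_mul_Lq_of_nonneg (μ := volume) hpq
    (f := φ) (g := ψ)
    (Filter.Eventually.of_forall fun ξ => by positivity)
    (Filter.Eventually.of_forall fun ξ : R2 => by
      have h0 := norm_nonneg (FT f ξ); positivity)
    hφmem' hψmem'
  -- rewrite both sides of hCS
  have hprod : ∀ ξ : R2, φ ξ * ψ ξ = Real.exp (-(t * ‖ξ‖^2)) * F ξ := by
    intro ξ
    rw [hφdef, hψdef]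
    field_simp
  have hr2 : ∀ x : ℝ, x ^ (2:ℝ) = x ^ 2 := fun x => by
    rw [show (2:ℝ) = ((2:ℕ):ℝ) by norm_num, Real.rpow_natCast]
  have hφint : ∫ ξ : R2, φ ξ ^ (2:ℝ) = ∫ ξ : R2, Real.exp (-(2*t) * ‖ξ‖^2) / (1 + ‖ξ‖^2) := by
    refine integral_congr_ae (Filter.Eventually.of_forall fun ξ => ?_)
    show φ ξ ^ (2:ℝ) = _
    rw [hr2, hφsq ξ]
  have hψint : ∫ ξ : R2, ψ ξ ^ (2:ℝ) = ∫ ξ : R2, (1 + ‖ξ‖^2) * ‖FT f ξ‖^2 := by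
    refine integral_congr_ae (Filter.Eventually.of_forall fun ξ => ?_)
    show ψ ξ ^ (2:ℝ) = (1 + ‖ξ‖^2) * ‖FT f ξ‖^2
    rw [hr2, hψdef]
    simp only [mul_pow, hsq]
    rfl
  set A := ∫ ξ : R2, Real.exp (-(2*t) * ‖ξ‖^2) / (1 + ‖ξ‖^2) with hAdef
  set B := ∫ ξ : R2, (1 + ‖ξ‖^2) * ‖FT f ξ‖^2 with hBdef
  have hAnn : 0 ≤ A := integral_nonneg fun ξ => by positivity
  have hBnn : 0 ≤ B := integral_nonneg fun ξ => by positivity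
  have hAle : A ≤ 2 * π * L := radial_bound t ht
  rw [hφint, hψint] at hCS
  have hH1 : H1norm f = B ^ ((1:ℝ)/2) := rfl
  have key : ∫ ξ : R2, Real.exp (-(t * ‖ξ‖^2)) * F ξ ≤ A ^ ((1:ℝ)/2) * H1norm f := by
    rw [hH1]
    calc ∫ ξ : R2, Real.exp (-(t * ‖ξ‖^2)) * F ξ = ∫ ξ : R2, φ ξ * ψ ξ :=
        integral_congr_ae (Filter.Eventually.of_forall fun ξ => (hprod ξ).symm)
    _ ≤ A ^ ((1:ℝ)/2) * B ^ ((1:ℝ)/2) := hCS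
  -- pointwise bound on heat
  have hbound : ∀ x : R2, ‖heat t f x‖ ≤
      (2*π)⁻¹ * ∫ ξ : R2, Real.exp (-(t * ‖ξ‖^2)) * F ξ := by
    intro x
    show ‖(1 / (2 * (π : ℂ))) * ∫ ξ : R2,
        Complex.exp (Complex.I * ((inner ℝ x ξ : ℝ) : ℂ)) *
        (Complex.exp (-(t : ℂ) * (‖ξ‖ : ℂ) ^ 2) * FT f ξ)‖ ≤ _
    rw [norm_mul]
    have hc : ‖(1 / (2 * (π:ℂ)))‖ = (2*π)⁻¹ := by
      have h1 : (1 / (2 * (π:ℂ))) = ((((2*π)⁻¹ : ℝ)) : ℂ) := by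
        push_cast
        ring
      rw [h1, Complex.norm_real, Real.norm_eq_abs, abs_of_pos (by positivity)]
    rw [hc]
    refine mul_le_mul_of_nonneg_left ?_ (by positivity)
    refine (norm_integral_le_integral_norm _).trans_eq ?_
    refine integral_congr_ae (Filter.Eventually.of_forall fun ξ => ?_)
    show ‖Complex.exp (Complex.I * ((inner ℝ x ξ : ℝ) : ℂ)) *
        (Complex.exp (-(t:ℂ) * (‖ξ‖:ℂ)^2) * FT f ξ)‖ = Real.exp (-(t * ‖ξ‖^2)) * F ξ
    rw [norm_mul, norm_mul]
    have h1 : ‖Complex.exp (Complex.I * ((inner ℝ x ξ : ℝ) : ℂ))‖ = 1 := by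
      rw [Complex.norm_exp]
      simp [Complex.mul_re]
    have h2 : ‖Complex.exp (-(t:ℂ) * (‖ξ‖:ℂ)^2)‖ = Real.exp (-(t * ‖ξ‖^2)) := by
      have h3 : -(t:ℂ) * ((‖ξ‖:ℝ):ℂ)^2 = ((-(t * ‖ξ‖^2) : ℝ) : ℂ) := by
        push_cast
        ring
      rw [Complex.norm_exp, h3, Complex.ofReal_re]
    rw [h1, h2, one_mul]
  set C := (2*π)⁻¹ * ∫ ξ : R2, Real.exp (-(t * ‖ξ‖^2)) * F ξ with hCdef
  have hstep : eLpNorm (heat t f) ⊤ volume ≤ ENNReal.ofReal C := by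
    have h := eLpNorm_le_of_ae_bound (μ := volume) (p := ⊤) (f := heat t f) (C := C)
      (Filter.Eventually.of_forall hbound)
    simpa using h
  refine hstep.trans (ENNReal.ofReal_le_ofReal ?_)
  -- real arithmetic
  have hH1nn : 0 ≤ H1norm f := Real.rpow_nonneg hBnn _
  have hC1 : C ≤ (2*π)⁻¹ * (A ^ ((1:ℝ)/2) * H1norm f) :=
    mul_le_mul_of_nonneg_left key (by positivity)
  have hC2 : A ^ ((1:ℝ)/2) ≤ (2*π*L) ^ ((1:ℝ)/2) :=
    Real.rpow_le_rpow hAnn hAle (by norm_num)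
  have hLnn : (0:ℝ) ≤ L := by linarith
  have hsplit : (2*π*L) ^ ((1:ℝ)/2) = (2*π) ^ ((1:ℝ)/2) * L ^ ((1:ℝ)/2) :=
    Real.mul_rpow (by positivity) hLnn
  have hsqrtL : L ^ ((1:ℝ)/2) = Real.sqrt L := (Real.sqrt_eq_rpow L).symm

  have hconst : (2*π)⁻¹ * (2*π) ^ ((1:ℝ)/2) = (2*π) ^ (-(1/2 : ℝ)) := by
    have h2π : (0:ℝ) < 2*π := by positivity
    rw [show (-(1/2 : ℝ)) = (1:ℝ)/2 + (-1) by norm_num, Real.rpow_add h2π,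
      Real.rpow_neg_one]
    ring
  calc C ≤ (2*π)⁻¹ * (A ^ ((1:ℝ)/2) * H1norm f) := hC1
  _ ≤ (2*π)⁻¹ * ((2*π*L) ^ ((1:ℝ)/2) * H1norm f) := by
      refine mul_le_mul_of_nonneg_left (mul_le_mul_of_nonneg_right hC2 hH1nn) (by positivity)
  _ = (2 * π) ^ (-(1 / 2 : ℝ)) * Real.sqrt L * H1norm f := by
      rw [hsplit, hsqrtL, ← hconst]
      ring
end
end
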